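/- Let p be a prime and R a p-nilpotent commutative ring. Then there exist a commutative ring R' and an R-algebra structure on R' such that R' is a faithfully flat R-module and the quotient ring R'/pR' is semiperfect, i.e., the Frobenius a ↦ a^p on R'/pR' is surjective. -/

import Mathlib

universe u

open MvPolynomial Finsupp

namespace SemiperfectAux

lemma nat_digits_inj (p : ℕ) (hp : 0 < p) :
    ∀ (N : ℕ) (g g' : ℕ → ℕ), (∀ j, g j < p) → (∀ j, g' j < p) →
      (∑ j ∈ Finset.range N, g j * p ^ j) = (∑ j ∈ Finset.range N, g' j * p ^ j) →
      ∀ j, j < N → g j = g' j := by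
  intro N
  induction N with
  | zero => exact fun g g' _ _ _ j hj => absurd hj (Nat.not_lt_zero j)
  | succ N ih =>
    intro g g' hg hg' hsum j hj
    have expand : ∀ h : ℕ → ℕ, (∑ j ∈ Finset.range (N + 1), h j * p ^ j)
        = p * (∑ j ∈ Finset.range N, h (j + 1) * p ^ j) + h 0 := by
      intro h
      rw [Finset.sum_range_succ', pow_zero, mul_one, Finset.mul_sum]
      congr 1
      refine Finset.sum_congr rfl fun k _ => ?_
      rw [pow_succ]
      ring
    rw [expand g, expand g'] at hsum
    have h0 : g 0 = g' 0 := by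
      have := congrArg (· % p) hsum
      simpa [Nat.mul_add_mod, Nat.mod_eq_of_lt (hg 0), Nat.mod_eq_of_lt (hg' 0)] using this
    have hA : (∑ j ∈ Finset.range N, g (j + 1) * p ^ j)
        = ∑ j ∈ Finset.range N, g' (j + 1) * p ^ j := by
      rw [h0] at hsum
      exact Nat.eq_of_mul_eq_mul_left hp (by omega)
    rcases j with _ | k
    · exact h0
    · exact ih (fun j => g (j + 1)) (fun j => g' (j + 1)) (fun j => hg _) (fun j => hg' _) hA k
        (by omega)

lemma sum_digits_add_inv_le (p : ℕ) (hp : 1 < p) :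
    ∀ (N : ℕ) (d : ℕ → ℕ), (∀ n, d n < p) →
      (∑ n ∈ Finset.range N, (d n : ℚ≥0) * ((p : ℚ≥0) ^ (n + 1))⁻¹) + ((p : ℚ≥0) ^ N)⁻¹ ≤ 1 := by
  have hp0 : (p : ℚ≥0) ≠ 0 := Nat.cast_ne_zero.mpr (by omega)
  intro N
  induction N with
  | zero => simp
  | succ N ih =>
    intro d hd
    have hfac : (∑ n ∈ Finset.range N, (d (n + 1) : ℚ≥0) * ((p : ℚ≥0) ^ (n + 2))⁻¹)
        = (∑ n ∈ Finset.range N, (d (n + 1) : ℚ≥0) * ((p : ℚ≥0) ^ (n + 1))⁻¹) * (p : ℚ≥0)⁻¹ := by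
      rw [Finset.sum_mul]
      refine Finset.sum_congr rfl fun n _ => ?_
      rw [pow_succ, mul_inv, mul_assoc]
    calc (∑ n ∈ Finset.range (N + 1), (d n : ℚ≥0) * ((p : ℚ≥0) ^ (n + 1))⁻¹)
          + ((p : ℚ≥0) ^ (N + 1))⁻¹
        = ((∑ n ∈ Finset.range N, (d (n + 1) : ℚ≥0) * ((p : ℚ≥0) ^ (n + 1))⁻¹)
            + ((p : ℚ≥0) ^ N)⁻¹) * (p : ℚ≥0)⁻¹ + (d 0 : ℚ≥0) * (p : ℚ≥0)⁻¹ := by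
          rw [Finset.sum_range_succ', hfac]
          simp only [zero_add, pow_one]
          rw [pow_succ, mul_inv, add_mul]
          ring
      _ ≤ 1 * (p : ℚ≥0)⁻¹ + (d 0 : ℚ≥0) * (p : ℚ≥0)⁻¹ := by
          gcongr
          exact ih (fun n => d (n + 1)) (fun n => hd _)
      _ = ((1 : ℚ≥0) + d 0) * (p : ℚ≥0)⁻¹ := by ring
      _ ≤ (p : ℚ≥0) * (p : ℚ≥0)⁻¹ := by
          gcongr
          have : (1 : ℚ≥0) + d 0 = ((1 + d 0 : ℕ) : ℚ≥0) := by push_cast; ring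
          rw [this]
          exact Nat.cast_le.mpr (by have := hd 0; omega)
      _ = 1 := mul_inv_cancel₀ hp0

noncomputable section

variable (p : ℕ) (R : Type u) [CommRing R]

/-- The defining relations: `X (a,0) ^ p = C a` and `X (a,n+1) ^ p = X (a,n)`. -/
def rel : R × ℕ → MvPolynomial (R × ℕ) R := fun s =>
  match s with
  | (a, 0) => X (a, 0) ^ p - C a
  | (a, n + 1) => X (a, n + 1) ^ p - X (a, n)

def Idl : Ideal (MvPolynomial (R × ℕ) R) := Ideal.span (Set.range (rel p R))

abbrev Rq := MvPolynomial (R × ℕ) R ⧸ Idl p R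

abbrev W := AddMonoidAlgebra R (R →₀ ℚ≥0)

def qexp (s : R × ℕ) : R →₀ ℚ≥0 := Finsupp.single s.1 (((p : ℚ≥0) ^ (s.2 + 1))⁻¹)

def phi : MvPolynomial (R × ℕ) R →ₐ[R] W R :=
  MvPolynomial.aeval fun s => AddMonoidAlgebra.single (qexp p R s) 1

def intpart (m : R →₀ ℚ≥0) : R := m.prod fun a q => a ^ ⌊q⌋₊

def fracpart (m : R →₀ ℚ≥0) : R →₀ ℚ≥0 := m.mapRange (fun q => q - ⌊q⌋₊) (by simp)

def theta : W R →ₗ[R] W R :=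
  (Finsupp.lsum ℕ fun m =>
    LinearMap.toSpanSingleton R _ (AddMonoidAlgebra.single (fracpart R m) (intpart R m)))
    ∘ₗ (AddMonoidAlgebra.coeffLinearEquiv R).toLinearMap

lemma theta_single (m : R →₀ ℚ≥0) (r : R) :
    theta R (AddMonoidAlgebra.single m r)
      = AddMonoidAlgebra.single (fracpart R m) (r * intpart R m) := by
  rw [theta, LinearMap.comp_apply]
  refine (Finsupp.lsum_single _ _ m r).trans ?_
  rw [LinearMap.toSpanSingleton_apply, AddMonoidAlgebra.smul_single']


lemma intpart_add_single (m : R →₀ ℚ≥0) (a : R) :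
    intpart R (m + Finsupp.single a 1) = a * intpart R m := by
  classical
  have h1 : ∀ i ∈ m.support ∪ {a}, (fun (b : R) (q : ℚ≥0) => b ^ ⌊q⌋₊) i 0 = 1 := by
    intro i _; simp
  have hsub : (m + Finsupp.single a 1).support ⊆ m.support ∪ {a} := by
    refine Finsupp.support_add.trans ?_
    exact Finset.union_subset_union (le_refl _) Finsupp.support_single_subset
  have hsub' : m.support ⊆ m.support ∪ {a} := Finset.subset_union_left
  rw [intpart, intpart, Finsupp.prod_of_support_subset _ hsub _ h1,
    Finsupp.prod_of_support_subset _ hsub' _ h1]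
  have ha : a ∈ m.support ∪ {a} := Finset.mem_union_right _ (Finset.mem_singleton_self a)
  rw [← Finset.mul_prod_erase _ _ ha, ← Finset.mul_prod_erase _ _ ha, ← mul_assoc]
  congr 1
  · rw [Finsupp.add_apply, Finsupp.single_eq_same]
    rw [Nat.floor_add_one zero_le, pow_succ, mul_comm]
  · refine Finset.prod_congr rfl fun i hi => ?_
    rw [Finset.mem_erase] at hi
    rw [Finsupp.add_apply, Finsupp.single_eq_of_ne' (Ne.symm hi.1), add_zero]

lemma fracpart_add_single (m : R →₀ ℚ≥0) (a : R) :
    fracpart R (m + Finsupp.single a 1) = fracpart R m := by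
  classical
  ext b
  rw [fracpart, fracpart, Finsupp.mapRange_apply, Finsupp.mapRange_apply, Finsupp.add_apply]
  rcases eq_or_ne b a with rfl | hb
  · rw [Finsupp.single_eq_same, Nat.floor_add_one zero_le, Nat.cast_add, Nat.cast_one,
      add_tsub_add_eq_tsub_right]
  · rw [Finsupp.single_eq_of_ne' (Ne.symm hb), add_zero]

lemma intpart_fractional (m : R →₀ ℚ≥0) (hm : ∀ a, m a < 1) : intpart R m = 1 := by
  rw [intpart]
  have : (m.prod fun a q => a ^ ⌊q⌋₊) = m.prod fun _ _ => (1 : R) :=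
    Finsupp.prod_congr fun a _ => by rw [Nat.floor_eq_zero.mpr (hm a), pow_zero]
  rw [this]
  exact Finset.prod_const_one

lemma fracpart_fractional (m : R →₀ ℚ≥0) (hm : ∀ a, m a < 1) : fracpart R m = m := by
  ext a
  rw [fracpart, Finsupp.mapRange_apply, Nat.floor_eq_zero.mpr (hm a), Nat.cast_zero, tsub_zero]

def gen (a : R) : W R :=
  AddMonoidAlgebra.single (Finsupp.single a 1) 1 - AddMonoidAlgebra.single 0 a

def Kdl : Ideal (W R) := Ideal.span (Set.range (gen R))

def mexp (e : (R × ℕ) →₀ ℕ) : R →₀ ℚ≥0 := e.sum fun s k => k • qexp p R s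

lemma theta_mul_gen (w : W R) (a : R) : theta R (w * gen R a) = 0 := by
  induction w using AddMonoidAlgebra.induction_linear with
  | zero => rw [zero_mul, map_zero]
  | add f g hf hg => rw [add_mul, map_add, hf, hg, add_zero]
  | single m r =>
    rw [gen, mul_sub, AddMonoidAlgebra.single_mul_single, AddMonoidAlgebra.single_mul_single,
      map_sub, add_zero, theta_single, theta_single, fracpart_add_single, intpart_add_single,
      mul_one]
    rw [sub_eq_zero]
    congr 1
    ring

lemma theta_Kdl (x : W R) (hx : x ∈ Kdl R) : theta R x = 0 := by
  have main : ∀ x ∈ Kdl R, ∀ w : W R, theta R (w * x) = 0 := by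
    intro x hx
    refine Submodule.span_induction ?_ ?_ ?_ ?_ hx
    · rintro _ ⟨a, rfl⟩ w; exact theta_mul_gen R w a
    · intro w; rw [mul_zero, map_zero]
    · intro y z _ _ hy hz w; rw [mul_add, map_add, hy, hz, add_zero]
    · intro c y _ hy w
      rw [smul_eq_mul, ← mul_assoc]
      exact hy (w * c)
  have := main x hx 1
  rwa [one_mul] at this


lemma algebraMap_W (a : R) : algebraMap R (W R) a = AddMonoidAlgebra.single 0 a := by
  rw [Algebra.algebraMap_eq_smul_one, AddMonoidAlgebra.one_def, AddMonoidAlgebra.smul_single', mul_one]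

lemma phi_rel_mem (hp : p.Prime) (s : R × ℕ) : phi p R (rel p R s) ∈ Kdl R := by
  have hp0 : (p : ℚ≥0) ≠ 0 := Nat.cast_ne_zero.mpr hp.ne_zero
  obtain ⟨a, n⟩ := s
  cases n with
  | zero =>
    rw [rel, map_sub, map_pow, phi, MvPolynomial.aeval_X, MvPolynomial.aeval_C,
      AddMonoidAlgebra.single_pow, one_pow, algebraMap_W]
    have hq : p • qexp p R (a, 0) = Finsupp.single a 1 := by
      rw [qexp, Finsupp.smul_single, nsmul_eq_mul, zero_add, pow_one, mul_inv_cancel₀ hp0]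
    rw [hq]
    exact Ideal.subset_span ⟨a, rfl⟩
  | succ n =>
    rw [rel, map_sub, map_pow, phi, MvPolynomial.aeval_X, MvPolynomial.aeval_X,
      AddMonoidAlgebra.single_pow, one_pow]
    have hq : p • qexp p R (a, n + 1) = qexp p R (a, n) := by
      rw [qexp, qexp, Finsupp.smul_single, nsmul_eq_mul, pow_succ, mul_inv,
        mul_comm ((p : ℚ≥0) ^ (n + 1))⁻¹, ← mul_assoc, mul_inv_cancel₀ hp0, one_mul]
    rw [hq, sub_self]
    exact Ideal.zero_mem _

lemma phi_monomial (e : (R × ℕ) →₀ ℕ) (c : R) :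
    phi p R (MvPolynomial.monomial e c) = AddMonoidAlgebra.single (mexp p R e) c := by
  classical
  rw [phi, MvPolynomial.aeval_monomial, algebraMap_W]
  have h1 : (e.prod fun s k => AddMonoidAlgebra.single (qexp p R s) (1 : R) ^ k)
      = e.prod fun s k => AddMonoidAlgebra.single (k • qexp p R s) (1 : R) :=
    Finsupp.prod_congr fun s _ => by rw [AddMonoidAlgebra.single_pow, one_pow]
  have h2 : (e.prod fun s k => AddMonoidAlgebra.single (k • qexp p R s) (1 : R))
      = AddMonoidAlgebra.single (mexp p R e) 1 := by
    rw [Finsupp.prod, AddMonoidAlgebra.prod_single, Finset.prod_const_one, mexp, Finsupp.sum]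
  rw [h1, h2, AddMonoidAlgebra.single_mul_single, zero_add, mul_one]

lemma mexp_apply (e : (R × ℕ) →₀ ℕ) (a : R) (N : ℕ) (hN : ∀ n, N ≤ n → e (a, n) = 0) :
    mexp p R e a = ∑ n ∈ Finset.range N, (e (a, n) : ℚ≥0) * ((p : ℚ≥0) ^ (n + 1))⁻¹ := by
  classical
  have happ : mexp p R e a = ∑ s ∈ e.support,
      ((e s : ℚ≥0) * (if s.1 = a then ((p : ℚ≥0) ^ (s.2 + 1))⁻¹ else 0)) := by
    rw [mexp, Finsupp.sum_apply]
    refine Finset.sum_congr rfl fun s _ => ?_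
    simp only [Finsupp.smul_apply, qexp, Finsupp.single_apply, nsmul_eq_mul]
  set G : R × ℕ → ℚ≥0 :=
    fun s => (e s : ℚ≥0) * (if s.1 = a then ((p : ℚ≥0) ^ (s.2 + 1))⁻¹ else 0) with hG
  set T : Finset (R × ℕ) := {a} ×ˢ Finset.range N with hT
  have h1 : ∑ s ∈ e.support, G s = ∑ s ∈ e.support ∪ T, G s := by
    refine (Finset.sum_subset Finset.subset_union_left fun s _ hs => ?_)
    rw [hG]
    simp only [Finsupp.notMem_support_iff.mp hs, Nat.cast_zero, zero_mul]
  have h2 : ∑ s ∈ e.support ∪ T, G s = ∑ s ∈ T, G s := by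
    refine (Finset.sum_subset Finset.subset_union_right fun s _ hs => ?_).symm
    rcases eq_or_ne s.1 a with h | h
    · have hs2 : N ≤ s.2 := by
        by_contra hlt
        exact hs (by rw [hT]; exact Finset.mk_mem_product (by simp [h]) (by
          simp [Finset.mem_range]; omega))
      have : e s = 0 := by
        have : s = (a, s.2) := Prod.ext h rfl
        rw [this]; exact hN _ hs2
      rw [hG]; simp [this]
    · rw [hG]; simp [h]
  have h3 : ∑ s ∈ T, G s = ∑ n ∈ Finset.range N, G (a, n) := by
    rw [hT, Finset.sum_product, Finset.sum_singleton]
  rw [happ, h1, h2, h3]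
  refine Finset.sum_congr rfl fun n _ => ?_
  rw [hG]; simp

lemma mexp_lt_one (hp : p.Prime) (e : (R × ℕ) →₀ ℕ) (he : ∀ s, e s < p) (a : R) :
    mexp p R e a < 1 := by
  set N := (e.support.sup fun s => s.2) + 1 with hNdef
  have hN : ∀ n, N ≤ n → e (a, n) = 0 := by
    intro n hn
    by_contra h
    have : (a, n) ∈ e.support := Finsupp.mem_support_iff.mpr h
    have : n ≤ e.support.sup fun s => s.2 := Finset.le_sup (f := fun s => s.2) this
    omega
  rw [mexp_apply p R e a N hN]
  have hpos : 0 < ((p : ℚ≥0) ^ N)⁻¹ := by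
    rw [inv_pos]
    exact pow_pos (by exact_mod_cast hp.pos) N
  calc ∑ n ∈ Finset.range N, (e (a, n) : ℚ≥0) * ((p : ℚ≥0) ^ (n + 1))⁻¹
      < (∑ n ∈ Finset.range N, (e (a, n) : ℚ≥0) * ((p : ℚ≥0) ^ (n + 1))⁻¹)
          + ((p : ℚ≥0) ^ N)⁻¹ := lt_add_of_pos_right _ hpos
    _ ≤ 1 := sum_digits_add_inv_le p hp.one_lt N _ (fun n => he (a, n))

lemma mexp_inj (hp : p.Prime) (e e' : (R × ℕ) →₀ ℕ) (he : ∀ s, e s < p)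
    (he' : ∀ s, e' s < p) (h : mexp p R e = mexp p R e') : e = e' := by
  classical
  ext s
  obtain ⟨a, n⟩ := s
  set N := ((e.support ∪ e'.support).sup fun s => s.2) + n + 1 with hNdef
  have hbig : ∀ f : (R × ℕ) →₀ ℕ, f.support ⊆ e.support ∪ e'.support →
      ∀ m, N ≤ m → f (a, m) = 0 := by
    intro f hf m hm
    by_contra hc
    have h1 : (a, m) ∈ e.support ∪ e'.support := hf (Finsupp.mem_support_iff.mpr hc)
    have : m ≤ (e.support ∪ e'.support).sup fun s => s.2 := Finset.le_sup (f := fun s => s.2) h1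
    omega
  have hNe := mexp_apply p R e a N (hbig e Finset.subset_union_left)
  have hNe' := mexp_apply p R e' a N (hbig e' Finset.subset_union_right)
  have heq : (∑ n ∈ Finset.range N, (e (a, n) : ℚ≥0) * ((p : ℚ≥0) ^ (n + 1))⁻¹)
      = ∑ n ∈ Finset.range N, (e' (a, n) : ℚ≥0) * ((p : ℚ≥0) ^ (n + 1))⁻¹ := by
    rw [← hNe, ← hNe', h]
  have hp0 : (p : ℚ≥0) ≠ 0 := Nat.cast_ne_zero.mpr hp.ne_zero
  -- convert to a natural number statement
  have key : ∀ f : (R × ℕ) →₀ ℕ,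
      ((∑ k ∈ Finset.range N, f (a, k) * p ^ (N - 1 - k) : ℕ) : ℚ≥0)
        = (p : ℚ≥0) ^ N * ∑ k ∈ Finset.range N, (f (a, k) : ℚ≥0) * ((p : ℚ≥0) ^ (k + 1))⁻¹ := by
    intro f
    rw [Finset.mul_sum]
    push_cast
    refine Finset.sum_congr rfl fun k hk => ?_
    have hk' : k < N := Finset.mem_range.mp hk
    have hsplit : (p : ℚ≥0) ^ N = (p : ℚ≥0) ^ (k + 1) * (p : ℚ≥0) ^ (N - 1 - k) := by
      rw [← pow_add]
      congr 1
      omega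
    rw [hsplit]
    field_simp
  have hnat : (∑ k ∈ Finset.range N, e (a, k) * p ^ (N - 1 - k))
      = ∑ k ∈ Finset.range N, e' (a, k) * p ^ (N - 1 - k) := by
    have h2 : ((∑ k ∈ Finset.range N, e (a, k) * p ^ (N - 1 - k) : ℕ) : ℚ≥0)
        = ((∑ k ∈ Finset.range N, e' (a, k) * p ^ (N - 1 - k) : ℕ) : ℚ≥0) := by
      rw [key e, key e', heq]
    exact Nat.cast_injective h2
  have hrefl : ∀ f : (R × ℕ) →₀ ℕ,
      (∑ j ∈ Finset.range N, f (a, N - 1 - j) * p ^ j)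
        = ∑ k ∈ Finset.range N, f (a, k) * p ^ (N - 1 - k) := by
    intro f
    have h := Finset.sum_range_reflect (fun k => f (a, k) * p ^ (N - 1 - k)) N
    rw [← h]
    refine Finset.sum_congr rfl fun j hj => ?_
    have hj' : j < N := Finset.mem_range.mp hj
    have hjj : N - 1 - (N - 1 - j) = j := by omega
    rw [hjj]
  have hlt : N - 1 - n < N := by omega
  have hdig := nat_digits_inj p hp.pos N (fun j => e (a, N - 1 - j)) (fun j => e' (a, N - 1 - j))
    (fun j => he _) (fun j => he' _) (by rw [hrefl e, hrefl e', hnat]) (N - 1 - n) hlt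
  have hn : N - 1 - (N - 1 - n) = n := by omega
  simpa [hn] using hdig


def mkq : MvPolynomial (R × ℕ) R →ₐ[R] Rq p R := Ideal.Quotient.mkₐ R (Idl p R)

/-- Reduced exponents: all exponents `< p`. -/
def Red : Type u := {f : (R × ℕ) →₀ ℕ // ∀ s, f s < p}

def bas : Red p R → Rq p R := fun b => mkq p R (MvPolynomial.monomial b.1 1)

lemma monomial_mem_span (hp : 1 < p) (e : (R × ℕ) →₀ ℕ) :
    mkq p R (MvPolynomial.monomial e 1) ∈ Submodule.span R (Set.range (bas p R)) := by
  classical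
  suffices H : ∀ (d : ℕ) (e : (R × ℕ) →₀ ℕ), (e.sum fun _ k => k) = d →
      mkq p R (MvPolynomial.monomial e 1) ∈ Submodule.span R (Set.range (bas p R)) from
    H _ e rfl
  intro d
  induction d using Nat.strong_induction_on with
  | _ d ih =>
    intro e hd
    by_cases hred : ∀ s, e s < p
    · exact Submodule.subset_span ⟨⟨e, hred⟩, rfl⟩
    · push_neg at hred
      obtain ⟨s, hs⟩ := hred
      have hle : Finsupp.single s p ≤ e := Finsupp.single_le_iff.mpr hs
      set e' := e - Finsupp.single s p with he'def
      have he : e' + Finsupp.single s p = e := tsub_add_cancel_of_le hle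
      have hsum : ((e' + Finsupp.single s p).sum fun _ k => k)
          = (e'.sum fun _ k => k) + p := by
        rw [Finsupp.sum_add_index' (fun _ => rfl) (fun _ _ _ => rfl)]
        congr 1
        exact Finsupp.sum_single_index rfl
      have hdeg : (e'.sum fun _ k => k) + p = d := by
        rw [← hd, ← he, hsum]
      have hsplit : (MvPolynomial.monomial e (1 : R))
          = MvPolynomial.monomial e' 1 * MvPolynomial.X s ^ p := by
        rw [MvPolynomial.X_pow_eq_monomial, MvPolynomial.monomial_mul, mul_one, he]
      obtain ⟨a, n⟩ := s
      cases n with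
      | zero =>
        have hX : mkq p R (MvPolynomial.X (a, 0) ^ p) = mkq p R (MvPolynomial.C a) := by
          rw [mkq, Ideal.Quotient.mkₐ_eq_mk, Ideal.Quotient.eq]
          exact Ideal.subset_span ⟨(a, 0), rfl⟩
        have hCm : MvPolynomial.C a * MvPolynomial.monomial e' (1 : R)
            = a • MvPolynomial.monomial e' (1 : R) := by
          rw [MvPolynomial.C_mul_monomial, MvPolynomial.smul_monomial, smul_eq_mul]
        have hsmul : mkq p R (MvPolynomial.monomial e 1)
            = a • mkq p R (MvPolynomial.monomial e' 1) := by
          rw [hsplit, map_mul, hX, ← map_mul, mul_comm, hCm, map_smul]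
        rw [hsmul]
        exact Submodule.smul_mem _ _ (ih _ (by omega) e' rfl)
      | succ n =>
        have hX : mkq p R (MvPolynomial.X (a, n + 1) ^ p) = mkq p R (MvPolynomial.X (a, n)) := by
          rw [mkq, Ideal.Quotient.mkₐ_eq_mk, Ideal.Quotient.eq]
          exact Ideal.subset_span ⟨(a, n + 1), rfl⟩
        have hmul : MvPolynomial.monomial e' (1 : R) * MvPolynomial.X (a, n)
            = MvPolynomial.monomial (e' + Finsupp.single (a, n) 1) 1 := by
          rw [← pow_one (MvPolynomial.X (a, n) : MvPolynomial (R × ℕ) R),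
            MvPolynomial.X_pow_eq_monomial, MvPolynomial.monomial_mul, mul_one]
        have hsum1 : ((e' + Finsupp.single (a, n) 1).sum fun _ k => k)
            = (e'.sum fun _ k => k) + 1 := by
          rw [Finsupp.sum_add_index' (fun _ => rfl) (fun _ _ _ => rfl)]
          congr 1
          exact Finsupp.sum_single_index rfl
        have : mkq p R (MvPolynomial.monomial e 1)
            = mkq p R (MvPolynomial.monomial (e' + Finsupp.single (a, n) 1) 1) := by
          rw [hsplit, map_mul, hX, ← map_mul, hmul]
        rw [this]
        exact ih _ (by omega) _ hsum1

lemma span_top (hp : 1 < p) : ⊤ ≤ Submodule.span R (Set.range (bas p R)) := by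
  rintro x -
  obtain ⟨f, rfl⟩ := Ideal.Quotient.mkₐ_surjective R (Idl p R) x
  rw [f.as_sum, map_sum]
  refine Submodule.sum_mem _ fun e _ => ?_
  have : MvPolynomial.monomial e (MvPolynomial.coeff e f)
      = (MvPolynomial.coeff e f) • MvPolynomial.monomial e (1 : R) := by
    rw [MvPolynomial.smul_monomial, smul_eq_mul, mul_one]
  rw [this, map_smul]
  exact Submodule.smul_mem _ _ (monomial_mem_span p R hp e)

lemma bas_li (hp : p.Prime) : LinearIndependent R (bas p R) := by
  classical
  rw [linearIndependent_iff]
  intro l hl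
  set F : MvPolynomial (R × ℕ) R := ∑ b ∈ l.support, MvPolynomial.monomial b.1 (l b) with hF
  have hmk : mkq p R F = 0 := by
    rw [hF, map_sum, ← hl, Finsupp.linearCombination_apply, Finsupp.sum]
    refine Finset.sum_congr rfl fun b _ => ?_
    rw [bas, ← map_smul, MvPolynomial.smul_monomial, smul_eq_mul, mul_one]
  have hFI : F ∈ Idl p R := by
    rw [mkq, Ideal.Quotient.mkₐ_eq_mk] at hmk
    exact Ideal.Quotient.eq_zero_iff_mem.mp hmk
  have hphi : phi p R F ∈ Kdl R := by
    have hsub : Idl p R ≤ Ideal.comap (phi p R).toRingHom (Kdl R) := by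
      rw [Idl, Ideal.span_le]
      rintro _ ⟨s, rfl⟩
      exact phi_rel_mem p R hp s
    exact hsub hFI
  have h0 := theta_Kdl R _ hphi
  have hth : theta R (phi p R F)
      = ∑ b ∈ l.support, AddMonoidAlgebra.single (mexp p R b.1) (l b) := by
    rw [hF, map_sum, map_sum]
    refine Finset.sum_congr rfl fun b _ => ?_
    rw [phi_monomial, theta_single, fracpart_fractional R _ (mexp_lt_one p R hp b.1 b.2),
      intpart_fractional R _ (mexp_lt_one p R hp b.1 b.2), mul_one]
  rw [hth] at h0
  have h0' : (∑ b ∈ l.support, Finsupp.single (mexp p R b.1) (l b) : (R →₀ ℚ≥0) →₀ R)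
      = 0 := by
    rw [← AddMonoidAlgebra.coeff_eq_zero, AddMonoidAlgebra.coeff_sum] at h0; exact h0
  ext b0
  have happ := DFunLike.congr_fun h0' (mexp p R b0.1)
  rw [Finset.sum_apply'] at happ
  simp only [Finsupp.coe_zero, Pi.zero_apply] at happ
  by_cases hb0 : b0 ∈ l.support
  · have hne : ∀ b ∈ l.support, b ≠ b0 →
        (Finsupp.single (mexp p R b.1) (l b)) (mexp p R b0.1) = 0 := by
      intro b _ hbne
      refine Finsupp.single_eq_of_ne' fun hcon => ?_
      exact hbne (Subtype.ext (mexp_inj p R hp b.1 b0.1 b.2 b0.2 hcon))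
    rw [Finset.sum_eq_single_of_mem b0 hb0 hne, Finsupp.single_eq_same] at happ
    simpa using happ
  · simpa using Finsupp.notMem_support_iff.mp hb0

lemma frob_surj (hp : p.Prime) :
    Function.Surjective (fun a : Rq p R ⧸ Ideal.span {(p : Rq p R)} => a ^ p) := by
  have hp0 : ((p : ℕ) : Rq p R ⧸ Ideal.span {(p : Rq p R)}) = 0 := by
    rw [← map_natCast (Ideal.Quotient.mk (Ideal.span {(p : Rq p R)}))]
    exact Ideal.Quotient.eq_zero_iff_mem.mpr (Ideal.subset_span rfl)
  intro x
  obtain ⟨y, rfl⟩ := Ideal.Quotient.mk_surjective x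
  obtain ⟨f, rfl⟩ := Ideal.Quotient.mk_surjective y
  induction f using MvPolynomial.induction_on with
  | C a =>
    refine ⟨Ideal.Quotient.mk _ (Ideal.Quotient.mk (Idl p R) (MvPolynomial.X (a, 0))), ?_⟩
    have hX : Ideal.Quotient.mk (Idl p R) (MvPolynomial.X (a, 0) ^ p)
        = Ideal.Quotient.mk (Idl p R) (MvPolynomial.C a) :=
      Ideal.Quotient.eq.mpr (Ideal.subset_span ⟨(a, 0), rfl⟩)
    show _ ^ p = _
    rw [← map_pow, ← map_pow, hX]
  | add f g hf hg =>
    obtain ⟨yf, hyf⟩ := hf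
    obtain ⟨yg, hyg⟩ := hg
    simp only [] at hyf hyg
    obtain ⟨r, hr⟩ := exists_add_pow_prime_eq hp yf yg
    refine ⟨yf + yg, ?_⟩
    show (yf + yg) ^ p = _
    rw [hr, hyf, hyg, hp0, zero_mul (_ : Rq p R ⧸ Ideal.span {(p : Rq p R)}), zero_mul (_ : Rq p R ⧸ Ideal.span {(p : Rq p R)}), zero_mul (_ : Rq p R ⧸ Ideal.span {(p : Rq p R)}), add_zero (_ : Rq p R ⧸ Ideal.span {(p : Rq p R)}),
      ← RingHom.map_add, ← RingHom.map_add]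
  | mul_X f s hf =>
    obtain ⟨y, hy⟩ := hf
    simp only [] at hy
    refine ⟨y * Ideal.Quotient.mk _ (Ideal.Quotient.mk (Idl p R)
      (MvPolynomial.X (s.1, s.2 + 1))), ?_⟩
    have hX : Ideal.Quotient.mk (Idl p R) (MvPolynomial.X (s.1, s.2 + 1) ^ p)
        = Ideal.Quotient.mk (Idl p R) (MvPolynomial.X (s.1, s.2)) :=
      Ideal.Quotient.eq.mpr (Ideal.subset_span ⟨(s.1, s.2 + 1), rfl⟩)
    show _ ^ p = _
    rw [mul_pow (M := Rq p R ⧸ Ideal.span {(p : Rq p R)}), hy, ← map_pow, ← map_pow, hX, ← map_mul, ← map_mul]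

end

end SemiperfectAux

/-- Every `p`-nilpotent commutative ring `R` admits a faithfully flat algebra `R'` such that
`R'/pR'` is semiperfect (its Frobenius is surjective). -/
theorem exists_faithfullyFlat_semiperfect (p : ℕ) (hp : p.Prime)
    (R : Type u) [CommRing R] (hR : ∃ N : ℕ, (p : R) ^ N = 0) :
    ∃ (R' : Type u) (_ : CommRing R') (_ : Algebra R R'),
      Module.FaithfullyFlat R R' ∧
      Function.Surjective (fun a : R' ⧸ Ideal.span {(p : R')} => a ^ p) := by
  classical
  obtain hS | hS := subsingleton_or_nontrivial R
  · refine ⟨R, inferInstance, Algebra.id R, inferInstance, ?_⟩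
    haveI : Subsingleton (R ⧸ Ideal.span {(p : R)}) :=
      Function.Surjective.subsingleton Ideal.Quotient.mk_surjective
    intro x
    exact ⟨x, Subsingleton.elim _ _⟩
  · refine ⟨SemiperfectAux.Rq p R, inferInstance, inferInstance, ?_,
      SemiperfectAux.frob_surj p R hp⟩
    have li := SemiperfectAux.bas_li p R hp
    let bs : Module.Basis (SemiperfectAux.Red p R) R (SemiperfectAux.Rq p R) :=
      Module.Basis.mk li (SemiperfectAux.span_top p R hp.one_lt)
    haveI : Module.Free R (SemiperfectAux.Rq p R) := Module.Free.of_basis bs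
    haveI : Nontrivial (SemiperfectAux.Rq p R) := by
      have hne := li.ne_zero (⟨0, fun s => by simpa using hp.pos⟩ : SemiperfectAux.Red p R)
      exact nontrivial_of_ne _ _ hne
    infer_instance
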